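/- Let f : ℝ² → ℝ be continuous with f ≥ 0 everywhere, define F : ℝ⁴ → ℝ² by F(x,y,z,λ) = (x² − y + y²·f(z,λ), λ), and for λ ∈ ℝ set K_λ := {(u,v,a) ∈ ℝ³ : u² + v² = 1} \ {(0,1,a) : f(a,λ) = 0}. Fix b > 0 and λ ∈ ℝ. Then for every (x,y,z,λ) ∈ F⁻¹(b,λ) one has (x,y) ≠ (0,0), and the point g(x,y,z) := (x/√(x²+y²), y/√(x²+y²), z) belongs to K_λ; i.e., g is a well-defined map from F⁻¹(b,λ) into K_λ. -/

import Mathlib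

/-- For continuous `f ≥ 0` and `F(x,y,z,λ) = (x² − y + y²·f(z,λ), λ)`,
with `b > 0` fixed, every point of the fiber `F⁻¹(b,λ)` satisfies `(x,y) ≠ (0,0)`,
and `g(x,y,z) = (x/√(x²+y²), y/√(x²+y²), z)` lands in
`K_λ = {(u,v,a) : u² + v² = 1} \ {(0,1,a) : f(a,λ) = 0}`. -/
theorem stmt_1 (f : ℝ × ℝ → ℝ) (hf : Continuous f)
    (hfpos : ∀ p : ℝ × ℝ, 0 ≤ f p)
    (F : ℝ × ℝ × ℝ × ℝ → ℝ × ℝ)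
    (hF : ∀ x y z l : ℝ, F (x, y, z, l) = (x ^ 2 - y + y ^ 2 * f (z, l), l))
    (b l : ℝ) (hb : 0 < b)
    (K : Set (ℝ × ℝ × ℝ))
    (hK : K = {p : ℝ × ℝ × ℝ | p.1 ^ 2 + p.2.1 ^ 2 = 1} \
      {p : ℝ × ℝ × ℝ | p.1 = 0 ∧ p.2.1 = 1 ∧ f (p.2.2, l) = 0}) :
    ∀ x y z : ℝ, (x, y, z, l) ∈ F ⁻¹' {(b, l)} →
      (x, y) ≠ (0, 0) ∧
      (x / Real.sqrt (x ^ 2 + y ^ 2), y / Real.sqrt (x ^ 2 + y ^ 2), z) ∈ K := by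
  intro x y z hmem
  rw [Set.mem_preimage, hF, Set.mem_singleton_iff, Prod.mk.injEq] at hmem
  obtain ⟨heq, -⟩ := hmem
  have hne : (x, y) ≠ (0, 0) := by
    intro h
    rw [Prod.mk.injEq] at h
    obtain ⟨hx, hy⟩ := h
    rw [hx, hy] at heq
    simp at heq
    linarith
  refine ⟨hne, ?_⟩
  have hsum : 0 < x ^ 2 + y ^ 2 := by
    rcases eq_or_ne x 0 with hx | hx
    · have hy : y ≠ 0 := by
        intro hy; exact hne (by rw [hx, hy])
      positivity
    · positivity
  have hr : 0 < Real.sqrt (x ^ 2 + y ^ 2) := Real.sqrt_pos.mpr hsum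
  have hr2 : Real.sqrt (x ^ 2 + y ^ 2) ^ 2 = x ^ 2 + y ^ 2 := Real.sq_sqrt hsum.le
  rw [hK]
  constructor
  · show (x / _) ^ 2 + (y / _) ^ 2 = 1
    field_simp
    exact hr2.symm
  · intro ⟨h1, h2, h3⟩
    simp only at h1 h2 h3
    have hx : x = 0 := by
      have := div_eq_zero_iff.mp h1
      rcases this with h | h
      · exact h
      · exact absurd h hr.ne'
    have hy : y = Real.sqrt (x ^ 2 + y ^ 2) := by
      field_simp at h2; linarith
    have hypos : 0 < y := hy ▸ hr
    rw [hx, h3] at heq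
    simp at heq
    linarith
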